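/- Legendre transform of the quantum Kullback–Leibler divergence in its first argument: for any μ0 ∈ S^d_{++} and any u ∈ S^d, sup over P ∈ S^d_{++} of [ tr(u P) − KL(P|μ0) ] = tr( exp(u + log μ0) − μ0 ), and the supremum is attained uniquely at P = exp(u + log μ0). -/

import Mathlib

open Matrix

/-- Matrix exponential of a real matrix. -/
noncomputable def mexp {d : ℕ} (A : Matrix (Fin d) (Fin d) ℝ) : Matrix (Fin d) (Fin d) ℝ :=
  NormedSpace.exp A

/-- Matrix logarithm of a symmetric (hermitian) real matrix, defined through the
eigendecomposition `P = U diag(σ) Uᵀ` as `log P = U diag(log σ) Uᵀ` (junk value `0`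
on non-symmetric matrices). -/
noncomputable def mlog {d : ℕ} (A : Matrix (Fin d) (Fin d) ℝ) : Matrix (Fin d) (Fin d) ℝ :=
  if h : A.IsHermitian then
    (h.eigenvectorUnitary : Matrix (Fin d) (Fin d) ℝ)
      * diagonal (fun i => Real.log (h.eigenvalues i))
      * star (h.eigenvectorUnitary : Matrix (Fin d) (Fin d) ℝ)
  else 0

/-- Quantum (von Neumann) entropy `H(P) = -tr(P log P - P)`. -/
noncomputable def qH {d : ℕ} (P : Matrix (Fin d) (Fin d) ℝ) : ℝ :=
  -(P * mlog P - P).trace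

/-- Quantum Kullback-Leibler divergence `KL(P|Q) = tr(P log P - P log Q - P + Q)`. -/
noncomputable def qKL {d : ℕ} (P Q : Matrix (Fin d) (Fin d) ℝ) : ℝ :=
  (P * mlog P - P * mlog Q - P + Q).trace

section Aux

variable {d : ℕ} {A : Matrix (Fin d) (Fin d) ℝ}

lemma mlog_eq_cfc (hA : A.IsHermitian) : mlog A = cfc Real.log A := by
  rw [Matrix.IsHermitian.cfc_eq hA, mlog, dif_pos hA, Matrix.IsHermitian.cfc]
  congr 2

lemma mexp_eq_cfc (hA : A.IsHermitian) : mexp A = cfc Real.exp A := by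
  rw [Matrix.IsHermitian.cfc_eq hA, Matrix.IsHermitian.cfc, mexp]
  conv_lhs =>
    rw [show A = (hA.eigenvectorUnitary : Matrix (Fin d) (Fin d) ℝ)
      * diagonal (RCLike.ofReal ∘ hA.eigenvalues)
      * star (hA.eigenvectorUnitary : Matrix (Fin d) (Fin d) ℝ) from hA.spectral_theorem]
  have hU : (hA.eigenvectorUnitary : Matrix (Fin d) (Fin d) ℝ)⁻¹
      = star (hA.eigenvectorUnitary : Matrix (Fin d) (Fin d) ℝ) :=
    inv_eq_left_inv (Unitary.star_mul_self_of_mem hA.eigenvectorUnitary.2)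
  rw [← hU, Matrix.exp_conj _ _ ?_, Matrix.exp_diagonal, hU]
  · congr 2
    rw [Pi.exp_def]
    ext i j
    rcases eq_or_ne i j with rfl | h
    · simp [Function.comp, ← Real.exp_eq_exp_ℝ]
    · simp [diagonal_apply_ne _ h]
  · exact (Unitary.toUnits hA.eigenvectorUnitary).isUnit

lemma herm_conj_diag (V : Matrix (Fin d) (Fin d) ℝ) (e : Fin d → ℝ) :
    (V * diagonal e * star V).IsHermitian := by
  rw [star_eq_conjTranspose]
  exact isHermitian_mul_mul_conjTranspose V (isHermitian_diagonal e)

lemma posDef_conj_diag {V : Matrix (Fin d) (Fin d) ℝ}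
    (hV : V ∈ Matrix.unitaryGroup (Fin d) ℝ) {e : Fin d → ℝ} (he : ∀ i, 0 < e i) :
    (V * diagonal e * star V).PosDef := by
  refine posDef_iff_dotProduct_mulVec.mpr ⟨herm_conj_diag V e, fun x hx => ?_⟩
  have hy : star V *ᵥ x ≠ 0 := by
    intro h
    apply hx
    have h2 : V *ᵥ (star V *ᵥ x) = 0 := by rw [h, mulVec_zero]
    rwa [mulVec_mulVec, (mem_unitaryGroup_iff.mp hV), one_mulVec] at h2
  have h0 := (Matrix.PosDef.diagonal he).dotProduct_mulVec_pos hy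
  set y := star V *ᵥ x with hy'
  have h1 : star y = star x ᵥ* V := by
    rw [hy', star_mulVec, star_eq_conjTranspose, conjTranspose_conjTranspose]
  calc 0 < star y ⬝ᵥ diagonal e *ᵥ y := h0
    _ = star x ⬝ᵥ (V * diagonal e * star V) *ᵥ x := by
        rw [h1, hy', ← dotProduct_mulVec]
        simp only [mulVec_mulVec]
        rw [mul_assoc V (diagonal e) (star V)]

lemma mlog_mexp (hA : A.IsHermitian) (hherm : (mexp A).IsHermitian) :
    mlog (mexp A) = A := by
  rw [mlog_eq_cfc hherm, mexp_eq_cfc hA,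
    ← cfc_comp Real.log Real.exp A hA.isSelfAdjoint ?hg ?hf]
  · rw [show Real.log ∘ Real.exp = id from funext Real.log_exp, cfc_id ℝ A hA.isSelfAdjoint]
  case hg =>
    apply Real.continuousOn_log.mono
    rintro - ⟨x, -, rfl⟩
    exact (Real.exp_pos x).ne'
  case hf => exact Real.continuous_exp.continuousOn

lemma real_spectral (hA : A.IsHermitian) :
    A = (hA.eigenvectorUnitary : Matrix (Fin d) (Fin d) ℝ) * diagonal hA.eigenvalues
      * star (hA.eigenvectorUnitary : Matrix (Fin d) (Fin d) ℝ) := by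
  conv_lhs => rw [hA.spectral_theorem]
  congr 2

lemma klein_scalar {p q : ℝ} (hp : 0 < p) (hq : 0 < q) :
    0 ≤ p * Real.log p - p * Real.log q - p + q ∧
      (p * Real.log p - p * Real.log q - p + q = 0 → p = q) := by
  have hd : 0 < q / p := div_pos hq hp
  have hlog : Real.log (q / p) = Real.log q - Real.log p := Real.log_div hq.ne' hp.ne'
  constructor
  · have h := Real.log_le_sub_one_of_pos hd
    rw [hlog] at h
    have h2 := mul_le_mul_of_nonneg_left h hp.le
    have hqp : p * (q / p - 1) = q - p := by field_simp
    nlinarith [h2]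
  · intro h
    by_contra hne
    have h1 : q / p ≠ 1 := fun h1 => hne ((div_eq_one_iff_eq hp.ne').mp h1).symm
    have h2 := Real.log_lt_sub_one_of_pos hd h1
    rw [hlog] at h2
    have h3 := mul_lt_mul_of_pos_left h2 hp
    have hqp : p * (q / p - 1) = q - p := by field_simp
    nlinarith [h3]

lemma trace_conj_unitary {V : Matrix (Fin d) (Fin d) ℝ}
    (hV : V ∈ Matrix.unitaryGroup (Fin d) ℝ) (B : Matrix (Fin d) (Fin d) ℝ) :
    (V * B * star V).trace = B.trace := by
  rw [trace_mul_cycle, Unitary.star_mul_self_of_mem hV, one_mul]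

lemma qKL_nonneg_eq {P Q : Matrix (Fin d) (Fin d) ℝ} (hP : P.PosDef) (hQ : Q.PosDef) :
    0 ≤ qKL P Q ∧ (qKL P Q = 0 → P = Q) := by
  classical
  have hPh : P.IsHermitian := hP.1
  have hQh : Q.IsHermitian := hQ.1
  set V := (hPh.eigenvectorUnitary : Matrix (Fin d) (Fin d) ℝ) with hVdef
  set W := (hQh.eigenvectorUnitary : Matrix (Fin d) (Fin d) ℝ) with hWdef
  set p := hPh.eigenvalues with hpdef
  set q := hQh.eigenvalues with hqdef
  have hp : ∀ i, 0 < p i := fun i => hP.eigenvalues_pos i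
  have hq : ∀ i, 0 < q i := fun i => hQ.eigenvalues_pos i
  have hVV : star V * V = 1 := Unitary.star_mul_self_of_mem (SetLike.coe_mem _)
  have hVV' : V * star V = 1 := Unitary.mul_star_self_of_mem (SetLike.coe_mem _)
  have hWW : star W * W = 1 := Unitary.star_mul_self_of_mem (SetLike.coe_mem _)
  have hWW' : W * star W = 1 := Unitary.mul_star_self_of_mem (SetLike.coe_mem _)
  set M := star V * W with hMdef
  have hsM : star M = star W * V := by rw [hMdef, StarMul.star_mul, star_star]
  have hMsM : M * star M = 1 := by
    rw [hsM, hMdef]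
    calc star V * W * (star W * V) = star V * (W * star W) * V := by
          simp only [mul_assoc]
      _ = 1 := by rw [hWW', mul_one, hVV]
  have hsMM : star M * M = 1 := by
    rw [hsM, hMdef]
    calc star W * V * (star V * W) = star W * (V * star V) * W := by
          simp only [mul_assoc]
      _ = 1 := by rw [hVV', mul_one, hWW]
  have hrow : ∀ i, ∑ j, (M i j) ^ 2 = 1 := by
    intro i
    have := congrFun (congrFun hMsM i) i
    simpa [mul_apply, conjTranspose_apply, pow_two] using this
  have hcol : ∀ j, ∑ i, (M i j) ^ 2 = 1 := by
    intro j
    have := congrFun (congrFun hsMM j) j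
    simpa [mul_apply, conjTranspose_apply, pow_two] using this
  -- trace computations
  have hmlogP : mlog P = V * diagonal (fun i => Real.log (p i)) * star V := by
    rw [mlog, dif_pos hPh]
  have hmlogQ : mlog Q = W * diagonal (fun j => Real.log (q j)) * star W := by
    rw [mlog, dif_pos hQh]
  have cancel : ∀ X : Matrix (Fin d) (Fin d) ℝ, star V * (V * X) = X := by
    intro X; rw [← mul_assoc, hVV, one_mul]
  have hP' : P = V * diagonal p * star V := real_spectral hPh
  have hQ' : Q = W * diagonal q * star W := real_spectral hQh
  have T1 : (P * mlog P).trace = ∑ i, p i * Real.log (p i) := by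
    have hPP : P * mlog P
        = V * (diagonal p * diagonal (fun i => Real.log (p i))) * star V := by
      rw [hmlogP]
      conv_lhs => rw [hP']
      simp only [mul_assoc, cancel]
    rw [hPP, trace_conj_unitary (SetLike.coe_mem _), diagonal_mul_diagonal, trace_diagonal]
  have T3 : P.trace = ∑ i, p i := by
    conv_lhs => rw [hP']
    rw [trace_conj_unitary (SetLike.coe_mem _), trace_diagonal]
  have T4 : Q.trace = ∑ j, q j := by
    conv_lhs => rw [hQ']
    rw [trace_conj_unitary (SetLike.coe_mem _), trace_diagonal]
  have T2 : (P * mlog Q).trace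
      = ∑ i, ∑ j, p i * ((M i j) ^ 2 * Real.log (q j)) := by
    have hPQ : P * mlog Q
        = V * (diagonal p * (M * diagonal (fun j => Real.log (q j)) * star M)) * star V := by
      rw [hmlogQ, hsM, hMdef]
      conv_lhs => rw [hP']
      simp only [mul_assoc, hVV', mul_one]
    rw [hPQ, trace_conj_unitary (SetLike.coe_mem _)]
    rw [Matrix.trace]
    refine Finset.sum_congr rfl fun i _ => ?_
    rw [Matrix.diag, diagonal_mul]
    have hent : ((M * diagonal fun j => Real.log (q j)) * star M) i i
        = ∑ j, (M i j * Real.log (q j)) * M i j := by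
      rw [mul_apply]
      refine Finset.sum_congr rfl fun j _ => ?_
      simp [mul_diagonal, Matrix.star_apply]
    rw [hent, Finset.mul_sum]
    exact Finset.sum_congr rfl fun j _ => by ring
  -- the key double-sum identity
  have key : qKL P Q = ∑ i, ∑ j,
      (M i j) ^ 2 * (p i * Real.log (p i) - p i * Real.log (q j) - p i + q j) := by
    have e0 : qKL P Q = (P * mlog P).trace - (P * mlog Q).trace - P.trace + Q.trace := by
      rw [qKL, trace_add, trace_sub, trace_sub]
    rw [e0, T1, T2, T3, T4]
    have e1 : ∑ i, p i * Real.log (p i)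
        = ∑ i, ∑ j, (M i j) ^ 2 * (p i * Real.log (p i)) := by
      refine Finset.sum_congr rfl fun i _ => ?_
      rw [← Finset.sum_mul, hrow i, one_mul]
    have e3 : ∑ i, p i = ∑ i, ∑ j, (M i j) ^ 2 * p i := by
      refine Finset.sum_congr rfl fun i _ => ?_
      rw [← Finset.sum_mul, hrow i, one_mul]
    have e4 : ∑ j, q j = ∑ i, ∑ j, (M i j) ^ 2 * q j := by
      rw [Finset.sum_comm]
      refine Finset.sum_congr rfl fun j _ => ?_
      rw [← Finset.sum_mul, hcol j, one_mul]
    have e2 : ∑ i, ∑ j, p i * ((M i j) ^ 2 * Real.log (q j))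
        = ∑ i, ∑ j, (M i j) ^ 2 * (p i * Real.log (q j)) := by
      exact Finset.sum_congr rfl fun i _ => Finset.sum_congr rfl fun j _ => by ring
    rw [e1, e2, e3, e4, ← Finset.sum_sub_distrib, ← Finset.sum_sub_distrib,
      ← Finset.sum_add_distrib]
    refine Finset.sum_congr rfl fun i _ => ?_
    rw [← Finset.sum_sub_distrib, ← Finset.sum_sub_distrib, ← Finset.sum_add_distrib]
    exact Finset.sum_congr rfl fun j _ => by ring
  have hterm_nonneg : ∀ i j, 0 ≤ (M i j) ^ 2
      * (p i * Real.log (p i) - p i * Real.log (q j) - p i + q j) :=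
    fun i j => mul_nonneg (sq_nonneg _) (klein_scalar (hp i) (hq j)).1
  constructor
  · rw [key]
    exact Finset.sum_nonneg fun i _ => Finset.sum_nonneg fun j _ => hterm_nonneg i j
  · intro h0
    rw [key] at h0
    have hz : ∀ i ∈ Finset.univ, ∑ j, (M i j) ^ 2
        * (p i * Real.log (p i) - p i * Real.log (q j) - p i + q j) = 0 :=
      (Finset.sum_eq_zero_iff_of_nonneg fun i _ =>
        Finset.sum_nonneg fun j _ => hterm_nonneg i j).mp h0
    have hz2 : ∀ i j, (M i j) ^ 2
        * (p i * Real.log (p i) - p i * Real.log (q j) - p i + q j) = 0 := fun i j =>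
      (Finset.sum_eq_zero_iff_of_nonneg fun j _ => hterm_nonneg i j).mp
        (hz i (Finset.mem_univ i)) j (Finset.mem_univ j)
    have hpq : ∀ i j, M i j ≠ 0 → p i = q j := by
      intro i j hM
      rcases mul_eq_zero.mp (hz2 i j) with h | h
      · exact absurd (pow_eq_zero_iff (by norm_num) |>.mp h) hM
      · exact (klein_scalar (hp i) (hq j)).2 h
    have hDM : diagonal p * M = M * diagonal q := by
      ext i j
      rw [diagonal_mul, mul_diagonal]
      by_cases hM : M i j = 0
      · rw [hM, mul_zero, zero_mul]
      · rw [hpq i j hM, mul_comm]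
    calc P = V * diagonal p * star V := hP'
      _ = V * (diagonal p * M) * star W := by
          rw [hMdef]
          simp only [mul_assoc, hWW', mul_one]
      _ = V * (M * diagonal q) * star W := by rw [hDM]
      _ = W * diagonal q * star W := by
          rw [hMdef]
          simp only [mul_assoc]
          rw [← mul_assoc V (star V) _, hVV', one_mul]
      _ = Q := hQ'.symm

lemma mexp_posDef (hA : A.IsHermitian) : (mexp A).PosDef := by
  rw [mexp_eq_cfc hA, Matrix.IsHermitian.cfc_eq hA, Matrix.IsHermitian.cfc]
  exact posDef_conj_diag (SetLike.coe_mem _) (fun i => Real.exp_pos _)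

lemma qKL_self (Q : Matrix (Fin d) (Fin d) ℝ) : qKL Q Q = 0 := by
  simp [qKL]

end Aux

/-- **Legendre transform of the quantum KL divergence in its first argument.**
For `μ0` positive definite and `u` symmetric,
`sup_{P ≻ 0} [tr(u P) - KL(P|μ0)] = tr(exp(u + log μ0) - μ0)`,
attained uniquely at `P = exp(u + log μ0)`. -/
theorem qKL_legendre {d : ℕ} (μ0 : Matrix (Fin d) (Fin d) ℝ) (hμ0 : μ0.PosDef)
    (u : Matrix (Fin d) (Fin d) ℝ) (hu : u.IsHermitian) :
    (mexp (u + mlog μ0)).PosDef ∧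
    ((u * mexp (u + mlog μ0)).trace - qKL (mexp (u + mlog μ0)) μ0
      = (mexp (u + mlog μ0) - μ0).trace) ∧
    (∀ P : Matrix (Fin d) (Fin d) ℝ, P.PosDef →
      (u * P).trace - qKL P μ0 ≤ (mexp (u + mlog μ0) - μ0).trace) ∧
    (∀ P : Matrix (Fin d) (Fin d) ℝ, P.PosDef →
      (u * P).trace - qKL P μ0 = (mexp (u + mlog μ0) - μ0).trace →
        P = mexp (u + mlog μ0)) := by
  have hμ0h : μ0.IsHermitian := hμ0.1
  have hlogμ0 : (mlog μ0).IsHermitian := by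
    rw [mlog, dif_pos hμ0h]
    exact herm_conj_diag _ _
  set A := u + mlog μ0 with hAdef
  have hA : A.IsHermitian := hu.add hlogμ0
  have hQpd : (mexp A).PosDef := mexp_posDef hA
  have hlogQ : mlog (mexp A) = A := mlog_mexp hA hQpd.1
  have keyid : ∀ P : Matrix (Fin d) (Fin d) ℝ,
      (u * P).trace - qKL P μ0
        = (mexp A).trace - μ0.trace - qKL P (mexp A) := by
    intro P
    rw [qKL, qKL, hlogQ, hAdef]
    simp only [trace_add, trace_sub, mul_add]
    rw [trace_mul_comm P u]
    ring
  refine ⟨hQpd, ?_, ?_, ?_⟩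
  · rw [keyid (mexp A), qKL_self, trace_sub, sub_zero]
  · intro P hP
    rw [keyid P, trace_sub]
    linarith [(qKL_nonneg_eq hP hQpd).1]
  · intro P hP heq
    rw [keyid P, trace_sub] at heq
    exact (qKL_nonneg_eq hP hQpd).2 (by linarith)
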